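/- arXiv:1512.08655 — 2 statements merged into one kernel-verified Lean document; each statement's English description precedes it below -/
import Mathlib

section
/- Let a triangle with vertices A, B, C in R^2 be subdivided by an interior point P into the three triangles PAB, PBC, PCA. Then the weighted sum of circumcenters, Area(PAB)·O(PAB) + Area(PBC)·O(PBC) + Area(PCA)·O(PCA), equals Area(ABC)·O(ABC), where O(·) denotes the circumcenter of a nondegenerate triangle. -/
open MeasureTheory Set Pointwise

lemma tri_plane_vol :
    volume {p : ℝ × ℝ | 0 ≤ p.1 ∧ 0 ≤ p.2 ∧ p.1 + p.2 ≤ 1} = ENNReal.ofReal (1/2) := by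
  have hmeas : MeasurableSet {p : ℝ × ℝ | 0 ≤ p.1 ∧ 0 ≤ p.2 ∧ p.1 + p.2 ≤ 1} := by
    apply MeasurableSet.inter
    · exact measurableSet_le measurable_const measurable_fst
    apply MeasurableSet.inter
    · exact measurableSet_le measurable_const measurable_snd
    · exact measurableSet_le (measurable_fst.add measurable_snd) measurable_const
  rw [show (volume : Measure (ℝ × ℝ)) = (volume : Measure ℝ).prod volume from rfl,
    Measure.prod_apply hmeas]
  have hslice : ∀ x : ℝ, volume {y : ℝ | (x, y) ∈ {p : ℝ × ℝ | 0 ≤ p.1 ∧ 0 ≤ p.2 ∧ p.1 + p.2 ≤ 1}}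
      = ENNReal.ofReal ((Icc (0:ℝ) 1).indicator (fun x => 1 - x) x) := by
    intro x
    by_cases hx : x ∈ Icc (0:ℝ) 1
    · have : {y : ℝ | (x, y) ∈ {p : ℝ × ℝ | 0 ≤ p.1 ∧ 0 ≤ p.2 ∧ p.1 + p.2 ≤ 1}} = Icc 0 (1 - x) := by
        ext y; simp only [mem_setOf_eq, mem_Icc]
        constructor
        · rintro ⟨_, h2, h3⟩; exact ⟨h2, by linarith⟩
        · rintro ⟨h2, h3⟩; exact ⟨hx.1, h2, by linarith⟩
      rw [this, Real.volume_Icc, indicator_of_mem hx]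
      ring_nf
    · have : {y : ℝ | (x, y) ∈ {p : ℝ × ℝ | 0 ≤ p.1 ∧ 0 ≤ p.2 ∧ p.1 + p.2 ≤ 1}} = ∅ := by
        ext y; simp only [mem_setOf_eq, mem_empty_iff_false, iff_false]
        rintro ⟨h1, h2, h3⟩
        simp only [mem_Icc, not_and_or, not_le] at hx
        rcases hx with h | h
        · linarith
        · linarith
      rw [this, measure_empty, indicator_of_notMem hx, ENNReal.ofReal_zero]
  have : ∀ x:ℝ, Prod.mk x ⁻¹' {p : ℝ × ℝ | 0 ≤ p.1 ∧ 0 ≤ p.2 ∧ p.1 + p.2 ≤ 1} = {y : ℝ | (x, y) ∈ {p : ℝ × ℝ | 0 ≤ p.1 ∧ 0 ≤ p.2 ∧ p.1 + p.2 ≤ 1}} := fun _ => rfl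
  rw [lintegral_congr (fun x => by rw [this x, hslice x])]
  rw [← ofReal_integral_eq_lintegral_ofReal]
  · congr 1
    rw [integral_indicator measurableSet_Icc]
    rw [integral_Icc_eq_integral_Ioc, ← intervalIntegral.integral_of_le (by norm_num : (0:ℝ) ≤ 1)]
    rw [intervalIntegral.integral_sub (intervalIntegrable_const)
      intervalIntegral.intervalIntegrable_id, intervalIntegral.integral_const,
      integral_id]
    norm_num
  · exact (ContinuousOn.integrableOn_compact isCompact_Icc
      ((continuous_const.sub continuous_id).continuousOn)).integrable_indicator measurableSet_Icc
  · apply Filter.Eventually.of_forall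
    intro x
    simp only [Pi.zero_apply]
    by_cases hx : x ∈ Icc (0:ℝ) 1
    · rw [indicator_of_mem hx]; simp only [mem_Icc] at hx; linarith [hx.2]
    · rw [indicator_of_notMem hx]


noncomputable abbrev E2 := EuclideanSpace ℝ (Fin 2)

lemma tri_E_vol :
    volume {u : E2 | 0 ≤ u 0 ∧ 0 ≤ u 1 ∧ u 0 + u 1 ≤ 1} = ENNReal.ofReal (1/2) := by
  have h1 := EuclideanSpace.volume_preserving_symm_measurableEquiv_toLp (Fin 2)
  have h2 := volume_preserving_finTwoArrow ℝ
  have h := h2.comp h1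
  have hmeas : MeasurableSet {p : ℝ × ℝ | 0 ≤ p.1 ∧ 0 ≤ p.2 ∧ p.1 + p.2 ≤ 1} := by
    apply MeasurableSet.inter
    · exact measurableSet_le measurable_const measurable_fst
    apply MeasurableSet.inter
    · exact measurableSet_le measurable_const measurable_snd
    · exact measurableSet_le (measurable_fst.add measurable_snd) measurable_const
  have key := h.measure_preimage hmeas.nullMeasurableSet
  have hpre : (MeasurableEquiv.finTwoArrow ∘ (MeasurableEquiv.toLp 2 (Fin 2 → ℝ)).symm) ⁻¹'
      {p : ℝ × ℝ | 0 ≤ p.1 ∧ 0 ≤ p.2 ∧ p.1 + p.2 ≤ 1}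
      = {u : E2 | 0 ≤ u 0 ∧ 0 ≤ u 1 ∧ u 0 + u 1 ≤ 1} := rfl
  rw [hpre] at key
  rw [key]
  exact tri_plane_vol

lemma tri_hull_eq :
    convexHull ℝ {(0 : E2), EuclideanSpace.single 0 1, EuclideanSpace.single 1 1}
      = {u : E2 | 0 ≤ u 0 ∧ 0 ≤ u 1 ∧ u 0 + u 1 ≤ 1} := by
  apply Subset.antisymm
  · apply convexHull_min
    · rintro x (rfl | rfl | rfl)
      · norm_num
      · simp [EuclideanSpace.single_apply]
      · simp [EuclideanSpace.single_apply]
    · have : {u : E2 | 0 ≤ u 0 ∧ 0 ≤ u 1 ∧ u 0 + u 1 ≤ 1}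
          = {u : E2 | 0 ≤ u 0} ∩ ({u : E2 | 0 ≤ u 1} ∩ {u : E2 | u 0 + u 1 ≤ 1}) := rfl
      rw [this]
      refine Convex.inter ?_ (Convex.inter ?_ ?_)
      · exact convex_halfSpace_ge
          ((EuclideanSpace.proj (0 : Fin 2) : E2 →L[ℝ] ℝ).toLinearMap.isLinear) 0
      · exact convex_halfSpace_ge
          ((EuclideanSpace.proj (1 : Fin 2) : E2 →L[ℝ] ℝ).toLinearMap.isLinear) 0
      · exact convex_halfSpace_le
          (((EuclideanSpace.proj (0 : Fin 2) : E2 →L[ℝ] ℝ).toLinearMap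
            + (EuclideanSpace.proj (1 : Fin 2) : E2 →L[ℝ] ℝ).toLinearMap).isLinear) 1
  · rintro u ⟨h0, h1, hs⟩
    rw [convexHull_insert (by simp : ({EuclideanSpace.single 0 1, EuclideanSpace.single 1 1}
        : Set E2).Nonempty), convexHull_pair]
    by_cases hz : u 0 + u 1 = 0
    · have hu0 : u 0 = 0 := by linarith
      have hu1 : u 1 = 0 := by linarith
      have : u = (0 : E2) := by
        ext j; fin_cases j <;> simpa [hu0, hu1]
      rw [this]
      exact mem_convexJoin.mpr ⟨0, rfl, _, left_mem_segment ℝ _ _, left_mem_segment ℝ _ _⟩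
    · set s := u 0 + u 1 with hsdef
      have hspos : 0 < s := lt_of_le_of_ne (by positivity) (Ne.symm hz)
      have hz_mem : (u 0 / s) • EuclideanSpace.single 0 1 + (u 1 / s) • EuclideanSpace.single 1 1
          ∈ segment ℝ (EuclideanSpace.single (0:Fin 2) (1:ℝ)) (EuclideanSpace.single 1 1) :=
        ⟨u 0 / s, u 1 / s, by positivity, by positivity, by field_simp; exact hsdef.symm, rfl⟩
      have hx : u ∈ segment ℝ (0 : E2)
          ((u 0 / s) • EuclideanSpace.single 0 1 + (u 1 / s) • EuclideanSpace.single 1 1) := by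
        refine ⟨1 - s, s, by linarith, le_of_lt hspos, by ring, ?_⟩
        ext j
        fin_cases j <;>
          simp [EuclideanSpace.single_apply, PiLp.smul_apply, PiLp.add_apply] <;>
          field_simp
      exact mem_convexJoin.mpr ⟨0, rfl, _, hz_mem, hx⟩

lemma hull_vol (X Y Z : E2) :
    volume (convexHull ℝ {X, Y, Z}) =
      ENNReal.ofReal (|(Y 0 - X 0) * (Z 1 - X 1) - (Y 1 - X 1) * (Z 0 - X 0)| / 2) := by
  set v : E2 := Y - X with hv
  set w : E2 := Z - X with hw
  set L : E2 →ₗ[ℝ] E2 :=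
    ((EuclideanSpace.proj (0 : Fin 2) : E2 →L[ℝ] ℝ).toLinearMap).smulRight v
    + ((EuclideanSpace.proj (1 : Fin 2) : E2 →L[ℝ] ℝ).toLinearMap).smulRight w with hL
  have hLapp : ∀ u : E2, L u = u 0 • v + u 1 • w := fun u => rfl
  -- determinant
  have hdet : LinearMap.det L = (Y 0 - X 0) * (Z 1 - X 1) - (Y 1 - X 1) * (Z 0 - X 0) := by
    rw [← LinearMap.det_toMatrix (EuclideanSpace.basisFun (Fin 2) ℝ).toBasis,
      Matrix.det_fin_two]
    simp only [LinearMap.toMatrix_apply, OrthonormalBasis.coe_toBasis,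
      OrthonormalBasis.coe_toBasis_repr_apply, EuclideanSpace.basisFun_apply, hLapp,
      EuclideanSpace.single_apply]
    simp [hv, hw]
    ring
  have he0 : L (EuclideanSpace.single 0 1) = v := by
    rw [hLapp]; simp [EuclideanSpace.single_apply]
  have he1 : L (EuclideanSpace.single 1 1) = w := by
    rw [hLapp]; simp [EuclideanSpace.single_apply]
  have himg : L '' {(0:E2), EuclideanSpace.single 0 1, EuclideanSpace.single 1 1}
      = {0, v, w} := by
    rw [Set.image_insert_eq, Set.image_insert_eq, Set.image_singleton, map_zero, he0, he1]
  have hvadd : (fun p => X +ᵥ p) '' {(0:E2), v, w} = {X, Y, Z} := by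
    rw [Set.image_insert_eq, Set.image_insert_eq, Set.image_singleton]
    congr 1
    · simp
    congr 1
    · simp [hv, vadd_eq_add]
    · simp [hw, vadd_eq_add]
  have hhull : convexHull ℝ ({X, Y, Z} : Set E2)
      = (fun p => X +ᵥ p) '' (L '' (convexHull ℝ {0, EuclideanSpace.single 0 1,
        EuclideanSpace.single 1 1})) := by
    rw [L.image_convexHull, himg]
    have := ((AffineEquiv.constVAdd ℝ E2 X).toAffineMap).image_convexHull
      ({(0:E2), v, w} : Set E2)
    have hco : ⇑((AffineEquiv.constVAdd ℝ E2 X).toAffineMap) = (fun p => X +ᵥ p) := rfl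
    rw [hco] at this
    rw [this, hvadd]
  rw [hhull]
  have himgvadd : (fun p => X +ᵥ p) '' (L '' (convexHull ℝ {0, EuclideanSpace.single 0 1,
      EuclideanSpace.single 1 1})) = X +ᵥ (L '' (convexHull ℝ {0, EuclideanSpace.single 0 1,
      EuclideanSpace.single 1 1})) := rfl
  rw [himgvadd, measure_vadd, Measure.addHaar_image_linearMap, hdet, tri_hull_eq, tri_E_vol,
    ← ENNReal.ofReal_mul (abs_nonneg _)]
  ring_nf


lemma sigma_ne_zero {X Y Z : E2} (h : AffineIndependent ℝ ![X, Y, Z]) :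
    (Y 0 - X 0) * (Z 1 - X 1) - (Y 1 - X 1) * (Z 0 - X 0) ≠ 0 := by
  intro hσ
  rw [affineIndependent_iff_not_collinear] at h
  apply h
  have hset : (Set.range ![X, Y, Z]) = {X, Y, Z} := by
    ext p
    constructor
    · rintro ⟨i, rfl⟩; fin_cases i <;> simp
    · rintro (rfl | rfl | rfl)
      exacts [⟨0, rfl⟩, ⟨1, rfl⟩, ⟨2, rfl⟩]
  rw [hset]
  set v : E2 := Y - X with hv
  set w : E2 := Z - X with hw
  have hσ' : v 0 * w 1 - v 1 * w 0 = 0 := by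
    simp only [hv, hw, PiLp.sub_apply]; linear_combination hσ
  have key : ∃ d : E2, (∃ r : ℝ, v = r • d) ∧ (∃ r : ℝ, w = r • d) := by
    by_cases hv0 : v 0 ≠ 0
    · refine ⟨v, ⟨1, (one_smul _ _).symm⟩, ⟨w 0 / v 0, ?_⟩⟩
      ext j; fin_cases j <;> simp [PiLp.smul_apply, smul_eq_mul] <;> field_simp <;>
        linear_combination hσ'
    · by_cases hv1 : v 1 ≠ 0
      · refine ⟨v, ⟨1, (one_smul _ _).symm⟩, ⟨w 1 / v 1, ?_⟩⟩
        ext j; fin_cases j <;> simp [PiLp.smul_apply, smul_eq_mul] <;> field_simp <;>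
          linear_combination -hσ'
      · push_neg at hv0 hv1
        refine ⟨w, ⟨0, ?_⟩, ⟨1, (one_smul _ _).symm⟩⟩
        ext j; fin_cases j <;> simp [hv0, hv1]
  obtain ⟨d, ⟨r1, hr1⟩, ⟨r2, hr2⟩⟩ := key
  rw [collinear_iff_of_mem (Set.mem_insert X _)]
  refine ⟨d, ?_⟩
  rintro p (rfl | rfl | rfl)
  · exact ⟨0, by simp⟩
  · exact ⟨r1, by rw [← hr1]; simp [hv, vadd_eq_add]⟩
  · exact ⟨r2, by rw [← hr2]; simp [hw, vadd_eq_add]⟩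


lemma dist_sq_eq {o x y : E2} (h : dist o x = dist o y) :
    (o 0 - x 0)^2 + (o 1 - x 1)^2 = (o 0 - y 0)^2 + (o 1 - y 1)^2 := by
  have h2 : dist o x ^ 2 = dist o y ^ 2 := by rw [h]
  rw [EuclideanSpace.dist_eq, EuclideanSpace.dist_eq,
    Real.sq_sqrt (by positivity), Real.sq_sqrt (by positivity), Fin.sum_univ_two,
    Fin.sum_univ_two] at h2
  simpa [Real.dist_eq, sq_abs] using h2

lemma circum_eq (o x y z : E2) (h1 : dist o x = dist o y) (h2 : dist o y = dist o z) :
    (2*((y 0 - x 0)*(z 1 - x 1)-(y 1 - x 1)*(z 0 - x 0))*(o 0) =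
      (x 0^2+x 1^2)*(y 1-z 1) + (y 0^2+y 1^2)*(z 1-x 1) + (z 0^2+z 1^2)*(x 1-y 1))
    ∧ (2*((y 0 - x 0)*(z 1 - x 1)-(y 1 - x 1)*(z 0 - x 0))*(o 1) =
      -((x 0^2+x 1^2)*(y 0-z 0) + (y 0^2+y 1^2)*(z 0-x 0) + (z 0^2+z 1^2)*(x 0-y 0))) := by
  have e1 := dist_sq_eq h1
  have e2 := dist_sq_eq h2
  constructor
  · linear_combination (z 1 - y 1)*e1 + (x 1 - y 1)*e2
  · linear_combination (y 0 - z 0)*e1 + (y 0 - x 0)*e2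

/-- Subdividing a triangle `ABC` by an interior point `P` into `PAB`, `PBC`, `PCA`:
the area-weighted sum of circumcenters of the three small triangles equals
`Area(ABC) • O(ABC)`. -/
theorem circumcenter_of_mass_triangle_subdivision
    (A B C P : EuclideanSpace ℝ (Fin 2))
    (hP : P ∈ interior (convexHull ℝ {A, B, C}))
    (hABC : AffineIndependent ℝ ![A, B, C])
    (hPAB : AffineIndependent ℝ ![P, A, B])
    (hPBC : AffineIndependent ℝ ![P, B, C])
    (hPCA : AffineIndependent ℝ ![P, C, A])
    (O₀ O₁ O₂ O₃ : EuclideanSpace ℝ (Fin 2))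
    (hO₀ : dist O₀ A = dist O₀ B ∧ dist O₀ B = dist O₀ C)
    (hO₁ : dist O₁ P = dist O₁ A ∧ dist O₁ A = dist O₁ B)
    (hO₂ : dist O₂ P = dist O₂ B ∧ dist O₂ B = dist O₂ C)
    (hO₃ : dist O₃ P = dist O₃ C ∧ dist O₃ C = dist O₃ A) :
    (volume (convexHull ℝ {P, A, B})).toReal • O₁ +
      (volume (convexHull ℝ {P, B, C})).toReal • O₂ +
      (volume (convexHull ℝ {P, C, A})).toReal • O₃ =
      (volume (convexHull ℝ {A, B, C})).toReal • O₀ := by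
  -- barycentric coordinates of P
  have hP' : P ∈ convexHull ℝ ({A, B, C} : Set E2) := interior_subset hP
  rw [convexHull_insert (⟨B, by simp⟩ : ({B, C} : Set E2).Nonempty), convexHull_pair] at hP'
  obtain ⟨a, ha, z, hz, hPseg⟩ := mem_convexJoin.mp hP'
  rw [Set.mem_singleton_iff] at ha
  obtain ⟨u, v', hu, hv', huv, rfl⟩ := hz
  obtain ⟨s, t, hs, ht, hst, hPe⟩ := hPseg
  rw [ha] at hPe
  set be := t*u with hbe
  set ga := t*v' with hga
  have hp0 : P 0 = (1-be-ga)*A 0 + be*B 0 + ga*C 0 := by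
    have h := congrArg (fun x : E2 => x 0) hPe
    simp only [PiLp.add_apply, PiLp.smul_apply, smul_eq_mul] at h
    linear_combination -h + A 0 * hst + t * A 0 * huv
  have hp1 : P 1 = (1-be-ga)*A 1 + be*B 1 + ga*C 1 := by
    have h := congrArg (fun x : E2 => x 1) hPe
    simp only [PiLp.add_apply, PiLp.smul_apply, smul_eq_mul] at h
    linear_combination -h + A 1 * hst + t * A 1 * huv
  -- volumes
  rw [hull_vol P A B, hull_vol P B C, hull_vol P C A, hull_vol A B C,
    ENNReal.toReal_ofReal (by positivity), ENNReal.toReal_ofReal (by positivity),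
    ENNReal.toReal_ofReal (by positivity), ENNReal.toReal_ofReal (by positivity)]
  -- signed areas
  set σ0 := (B 0 - A 0)*(C 1 - A 1) - (B 1 - A 1)*(C 0 - A 0) with hσ0def
  set σ1 := (A 0 - P 0)*(B 1 - P 1) - (A 1 - P 1)*(B 0 - P 0) with hσ1def
  set σ2 := (B 0 - P 0)*(C 1 - P 1) - (B 1 - P 1)*(C 0 - P 0) with hσ2def
  set σ3 := (C 0 - P 0)*(A 1 - P 1) - (C 1 - P 1)*(A 0 - P 0) with hσ3def
  have hσ0 : σ0 ≠ 0 := sigma_ne_zero hABC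
  have hσ1 : σ1 ≠ 0 := sigma_ne_zero hPAB
  have hσ2 : σ2 ≠ 0 := sigma_ne_zero hPBC
  have hσ3 : σ3 ≠ 0 := sigma_ne_zero hPCA
  have hs1 : σ1 = ga*σ0 := by
    rw [hσ1def, hσ0def]; linear_combination (A 1 - B 1)*hp0 + (B 0 - A 0)*hp1
  have hs2 : σ2 = (1-be-ga)*σ0 := by
    rw [hσ2def, hσ0def]; linear_combination (B 1 - C 1)*hp0 + (C 0 - B 0)*hp1
  have hs3 : σ3 = be*σ0 := by
    rw [hσ3def, hσ0def]; linear_combination (C 1 - A 1)*hp0 + (A 0 - C 0)*hp1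
  -- positivity of weights
  have hga_pos : 0 < ga := by
    rcases lt_or_eq_of_le (mul_nonneg ht hv') with h | h
    · exact h
    · exfalso; apply hσ1; rw [hs1, hga, ← h, zero_mul]
  have hbe_pos : 0 < be := by
    rcases lt_or_eq_of_le (mul_nonneg ht hu) with h | h
    · exact h
    · exfalso; apply hσ3; rw [hs3, hbe, ← h, zero_mul]
  have hal_pos : 0 < 1 - be - ga := by
    rcases lt_trichotomy (1 - be - ga) 0 with h | h | h
    · exfalso
      have : be + ga = t := by rw [hbe, hga]; linear_combination t * huv
      have : t ≤ 1 := by linarith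
      linarith
    · exfalso; apply hσ2; rw [hs2, h, zero_mul]
    · exact h
  -- absolute values
  have habs1 : |σ1| = ga * |σ0| := by rw [hs1, abs_mul, abs_of_pos hga_pos]
  have habs2 : |σ2| = (1-be-ga) * |σ0| := by rw [hs2, abs_mul, abs_of_pos hal_pos]
  have habs3 : |σ3| = be * |σ0| := by rw [hs3, abs_mul, abs_of_pos hbe_pos]
  rw [habs1, habs2, habs3]
  -- key identity
  have hkey : ga • O₁ + (1-be-ga) • O₂ + be • O₃ = O₀ := by
    have k0 := circum_eq O₀ A B C hO₀.1 hO₀.2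
    have k1 := circum_eq O₁ P A B hO₁.1 hO₁.2
    have k2 := circum_eq O₂ P B C hO₂.1 hO₂.2
    have k3 := circum_eq O₃ P C A hO₃.1 hO₃.2
    have h2σ0 : (2*σ0 : ℝ) ≠ 0 := mul_ne_zero two_ne_zero hσ0
    ext j
    fin_cases j
    · have main : 2*σ0*(ga*(O₁ 0) + (1-be-ga)*(O₂ 0) + be*(O₃ 0)) = 2*σ0*(O₀ 0) := by
        linear_combination k1.1 + k2.1 + k3.1 - k0.1
          - 2*(O₁ 0)*hs1 - 2*(O₂ 0)*hs2 - 2*(O₃ 0)*hs3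
      have := mul_left_cancel₀ h2σ0 main
      simpa [PiLp.add_apply, PiLp.smul_apply, smul_eq_mul] using this
    · have main : 2*σ0*(ga*(O₁ 1) + (1-be-ga)*(O₂ 1) + be*(O₃ 1)) = 2*σ0*(O₀ 1) := by
        linear_combination k1.2 + k2.2 + k3.2 - k0.2
          - 2*(O₁ 1)*hs1 - 2*(O₂ 1)*hs2 - 2*(O₃ 1)*hs3
      have := mul_left_cancel₀ h2σ0 main
      simpa [PiLp.add_apply, PiLp.smul_apply, smul_eq_mul] using this
  rw [← hkey]
  module
end

section
/- Let a tetrahedron with vertices A, B, C, D in R^3 be subdivided by an interior point P into the four tetrahedra PABC, PABD, PACD, PBCD (all nondegenerate). Then Σ Vol(T_i)·O(T_i) over these four tetrahedra equals Vol(ABCD)·O(ABCD), where O denotes the circumcenter. -/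
open MeasureTheory RealInnerProductSpace

namespace IMC2009

noncomputable section

abbrev E3 := EuclideanSpace ℝ (Fin 3)

def cross (u v : E3) : E3 :=
  (WithLp.equiv 2 (Fin 3 → ℝ)).symm
    ![u 1 * v 2 - u 2 * v 1, u 2 * v 0 - u 0 * v 2, u 0 * v 1 - u 1 * v 0]

@[simp] lemma cross_apply (u v : E3) (i : Fin 3) :
    cross u v i = ![u 1 * v 2 - u 2 * v 1, u 2 * v 0 - u 0 * v 2, u 0 * v 1 - u 1 * v 0] i := rfl

def det3 (u v w : E3) : ℝ :=
  u 0 * (v 1 * w 2 - v 2 * w 1) - u 1 * (v 0 * w 2 - v 2 * w 0) + u 2 * (v 0 * w 1 - v 1 * w 0)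

lemma inner_expand (u v : E3) : ⟪u, v⟫ = u 0 * v 0 + u 1 * v 1 + u 2 * v 2 := by
  simp [PiLp.inner_apply, Fin.sum_univ_three, RCLike.inner_apply, conj_trivial]
  ring

def Fv (a b c d : E3) : E3 :=
  det3 (b - a) (c - a) (d - a) • a +
    (1/2 : ℝ) • ((⟪b - a, b - a⟫ : ℝ) • cross (c - a) (d - a) +
      (⟪c - a, c - a⟫ : ℝ) • cross (d - a) (b - a) +
      (⟪d - a, d - a⟫ : ℝ) • cross (b - a) (c - a))

lemma key_inner {o a b : E3} (h : dist o a = dist o b) :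
    2 * ⟪o - a, b - a⟫ = ⟪b - a, b - a⟫ := by
  have h2 : ⟪o - a, o - a⟫ = ⟪o - b, o - b⟫ := by
    rw [real_inner_self_eq_norm_sq, real_inner_self_eq_norm_sq, ← dist_eq_norm, ← dist_eq_norm, h]
  simp only [inner_expand] at h2 ⊢
  simp only [PiLp.sub_apply] at h2 ⊢
  nlinarith [h2]

lemma det3_ne_zero {a b c d : E3} (h : AffineIndependent ℝ ![a, b, c, d]) :
    det3 (b - a) (c - a) (d - a) ≠ 0 := by
  have h1 := (affineIndependent_iff_linearIndependent_vsub ℝ ![a, b, c, d] 0).mp h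
  have h2 := h1.comp (fun i : Fin 3 => (⟨i.succ, Fin.succ_ne_zero i⟩ : {x : Fin 4 // x ≠ 0}))
    (fun i j hij => by
      simpa [Fin.succ_inj] using congrArg (fun x : {x : Fin 4 // x ≠ 0} => (x : Fin 4)) hij)
  have h3 : ((fun i : {x : Fin 4 // x ≠ 0} => (![a, b, c, d] i -ᵥ ![a, b, c, d] 0 : E3)) ∘
      fun i : Fin 3 => (⟨i.succ, Fin.succ_ne_zero i⟩ : {x : Fin 4 // x ≠ 0})) =
      ![b - a, c - a, d - a] := by
    funext i
    fin_cases i <;> simp [Function.comp, vsub_eq_sub]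
  rw [h3] at h2
  have h4 := h2.map' (WithLp.linearEquiv 2 ℝ (Fin 3 → ℝ)).toLinearMap
    (LinearEquiv.ker _)
  set A : Matrix (Fin 3) (Fin 3) ℝ :=
    Matrix.of (fun i => (WithLp.linearEquiv 2 ℝ (Fin 3 → ℝ)) (![b - a, c - a, d - a] i)) with hA
  have h5 : LinearIndependent ℝ (fun i => A i) := h4
  have h6 : IsUnit A.det := (Matrix.isUnit_iff_isUnit_det A).mp
    (Matrix.linearIndependent_rows_iff_isUnit.mp h5)
  have h7 : A.det = det3 (b - a) (c - a) (d - a) := by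
    rw [Matrix.det_fin_three]
    simp only [hA, Matrix.of_apply, Matrix.cons_val_zero, Matrix.cons_val_one, Matrix.head_cons,
      Matrix.cons_val_two, Matrix.tail_cons, WithLp.coe_linearEquiv]
    unfold det3
    ring
  rw [← h7]
  exact h6.ne_zero

lemma circ_formula {a b c d o : E3}
    (hab : dist o a = dist o b) (hac : dist o a = dist o c) (had : dist o a = dist o d) :
    det3 (b - a) (c - a) (d - a) • o = Fv a b c d := by
  have e1 := key_inner hab
  have e2 := key_inner hac
  have e3 := key_inner had
  simp only [inner_expand, PiLp.sub_apply] at e1 e2 e3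
  refine PiLp.ext fun j => ?_
  fin_cases j
  · simp only [Fin.zero_eta, Fin.mk_one, Fin.reduceFinMk, Fv, det3, inner_expand,
      PiLp.add_apply, PiLp.sub_apply, PiLp.smul_apply, cross_apply, smul_eq_mul,
      Matrix.cons_val_zero, Matrix.cons_val_one, Matrix.head_cons, Matrix.cons_val_two,
      Matrix.tail_cons]
    linear_combination (((c 1 - a 1) * (d 2 - a 2) - (c 2 - a 2) * (d 1 - a 1))/2) * e1 + (((d 1 - a 1) * (b 2 - a 2) - (d 2 - a 2) * (b 1 - a 1))/2) * e2 + (((b 1 - a 1) * (c 2 - a 2) - (b 2 - a 2) * (c 1 - a 1))/2) * e3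
  · simp only [Fin.zero_eta, Fin.mk_one, Fin.reduceFinMk, Fv, det3, inner_expand,
      PiLp.add_apply, PiLp.sub_apply, PiLp.smul_apply, cross_apply, smul_eq_mul,
      Matrix.cons_val_zero, Matrix.cons_val_one, Matrix.head_cons, Matrix.cons_val_two,
      Matrix.tail_cons]
    linear_combination (((c 2 - a 2) * (d 0 - a 0) - (c 0 - a 0) * (d 2 - a 2))/2) * e1 + (((d 2 - a 2) * (b 0 - a 0) - (d 0 - a 0) * (b 2 - a 2))/2) * e2 + (((b 2 - a 2) * (c 0 - a 0) - (b 0 - a 0) * (c 2 - a 2))/2) * e3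
  · simp only [Fin.zero_eta, Fin.mk_one, Fin.reduceFinMk, Fv, det3, inner_expand,
      PiLp.add_apply, PiLp.sub_apply, PiLp.smul_apply, cross_apply, smul_eq_mul,
      Matrix.cons_val_zero, Matrix.cons_val_one, Matrix.head_cons, Matrix.cons_val_two,
      Matrix.tail_cons]
    linear_combination (((c 0 - a 0) * (d 1 - a 1) - (c 1 - a 1) * (d 0 - a 0))/2) * e1 + (((d 0 - a 0) * (b 1 - a 1) - (d 1 - a 1) * (b 0 - a 0))/2) * e2 + (((b 0 - a 0) * (c 1 - a 1) - (b 1 - a 1) * (c 0 - a 0))/2) * e3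

lemma Fv_additive (P A B C D : E3) :
    Fv P A B D + Fv P B C D = Fv P A B C + Fv P A C D + Fv A B C D := by
  refine PiLp.ext fun j => ?_
  fin_cases j <;>
  · simp only [Fin.zero_eta, Fin.mk_one, Fin.reduceFinMk, Fv, det3, inner_expand,
      PiLp.add_apply, PiLp.sub_apply, PiLp.smul_apply, cross_apply, smul_eq_mul,
      Matrix.cons_val_zero, Matrix.cons_val_one, Matrix.head_cons, Matrix.cons_val_two,
      Matrix.tail_cons]
    ring

def baseVol : ENNReal :=
  volume (convexHull ℝ ({0, EuclideanSpace.single 0 1, EuclideanSpace.single 1 1,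
    EuclideanSpace.single 2 1} : Set E3))

lemma volume_tetra (a b c d : E3) :
    volume (convexHull ℝ ({a, b, c, d} : Set E3)) =
      ENNReal.ofReal |det3 (b - a) (c - a) (d - a)| * baseVol := by
  classical
  set M : Matrix (Fin 3) (Fin 3) ℝ := Matrix.of fun i j => ![b - a, c - a, d - a] j i with hM
  set L : E3 →ₗ[ℝ] E3 := Matrix.toEuclideanLin M with hL
  have hdet : LinearMap.det L = det3 (b - a) (c - a) (d - a) := by
    rw [hL, Matrix.toEuclideanLin_eq_toLin, LinearMap.det_toLin, Matrix.det_fin_three]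
    simp only [hM, Matrix.of_apply, Matrix.cons_val_zero, Matrix.cons_val_one, Matrix.head_cons,
      Matrix.cons_val_two, Matrix.tail_cons, PiLp.sub_apply]
    unfold det3
    simp only [PiLp.sub_apply]
    ring
  have hLapp : ∀ (x : E3) (i : Fin 3), L x i = M i 0 * x 0 + M i 1 * x 1 + M i 2 * x 2 := by
    intro x i
    rw [hL, Matrix.toEuclideanLin_apply]
    simp [Matrix.mulVec, dotProduct, Fin.sum_univ_three, WithLp.equiv_apply,
      WithLp.equiv_symm_apply]
  have hLe : ∀ j : Fin 3, L (EuclideanSpace.single j 1) = ![b - a, c - a, d - a] j := by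
    intro j
    refine PiLp.ext fun i => ?_
    rw [hLapp]
    fin_cases j <;>
      simp [EuclideanSpace.single_apply, hM]
  set f : E3 →ᵃ[ℝ] E3 := AffineMap.mk' (fun x => L x + a) L 0 (by
    intro p; simp [vsub_eq_sub, vadd_eq_add]) with hf
  have hfx : ∀ x, f x = L x + a := fun x => rfl
  have himg : f '' (convexHull ℝ ({0, EuclideanSpace.single 0 1, EuclideanSpace.single 1 1,
      EuclideanSpace.single 2 1} : Set E3)) = convexHull ℝ ({a, b, c, d} : Set E3) := by
    rw [AffineMap.image_convexHull]
    congr 1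
    simp only [Set.image_insert_eq, Set.image_singleton, hfx, map_zero, zero_add, hLe]
    simp [Matrix.cons_val_zero, Matrix.cons_val_one, Matrix.head_cons, Matrix.cons_val_two,
      Matrix.tail_cons, sub_add_cancel]
  rw [← himg]
  have hcomm : ⇑f '' (convexHull ℝ ({0, EuclideanSpace.single 0 1, EuclideanSpace.single 1 1,
      EuclideanSpace.single 2 1} : Set E3)) = (a + ·) '' (⇑L '' (convexHull ℝ
        ({0, EuclideanSpace.single 0 1, EuclideanSpace.single 1 1,
          EuclideanSpace.single 2 1} : Set E3))) := by
    rw [Set.image_image]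
    apply Set.image_congr'
    intro x
    rw [hfx, add_comm]
  rw [hcomm, Set.image_add_left, measure_preimage_add, Measure.addHaar_image_linearMap, hdet]
  rfl

lemma exists_weights {a b c d p : E3} (h : AffineIndependent ℝ ![a, b, c, d])
    (hp : p ∈ interior (convexHull ℝ ({a, b, c, d} : Set E3))) :
    ∃ w : Fin 4 → ℝ, (∀ i, 0 < w i) ∧ (w 0 + w 1 + w 2 + w 3 = 1) ∧
      p = w 0 • a + w 1 • b + w 2 • c + w 3 • d := by
  classical
  have htot : affineSpan ℝ (Set.range ![a, b, c, d]) = ⊤ := by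
    rw [h.affineSpan_eq_top_iff_card_eq_finrank_add_one]
    simp [finrank_euclideanSpace_fin]
  let bb : AffineBasis (Fin 4) ℝ E3 := ⟨![a, b, c, d], h, htot⟩
  have hrange : Set.range ![a, b, c, d] = ({a, b, c, d} : Set E3) := by
    ext x
    simp [Fin.exists_fin_succ, or_assoc]
    tauto
  have hp' : p ∈ interior (convexHull ℝ (Set.range bb)) := by
    show p ∈ interior (convexHull ℝ (Set.range ![a, b, c, d]))
    rwa [hrange]
  rw [bb.interior_convexHull] at hp'
  refine ⟨fun i => bb.coord i p, fun i => hp' i, ?_, ?_⟩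
  · have := bb.sum_coord_apply_eq_one p
    rwa [Fin.sum_univ_four] at this
  · have h1 := bb.affineCombination_coord_eq_self p
    have h2 : ∑ i, bb.coord i p = 1 := bb.sum_coord_apply_eq_one p
    rw [Finset.univ.affineCombination_eq_linear_combination _ _ h2, Fin.sum_univ_four] at h1
    exact h1.symm

lemma det_identities {A B C D P : E3} {w : Fin 4 → ℝ}
    (hsum : w 0 + w 1 + w 2 + w 3 = 1)
    (hP : P = w 0 • A + w 1 • B + w 2 • C + w 3 • D) :
    det3 (A - P) (B - P) (C - P) = -(w 3 * det3 (B - A) (C - A) (D - A)) ∧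
    det3 (A - P) (B - P) (D - P) = w 2 * det3 (B - A) (C - A) (D - A) ∧
    det3 (A - P) (C - P) (D - P) = -(w 1 * det3 (B - A) (C - A) (D - A)) ∧
    det3 (B - P) (C - P) (D - P) = w 0 * det3 (B - A) (C - A) (D - A) := by
  have hw0 : w 0 = 1 - w 1 - w 2 - w 3 := by linarith
  have hPj : ∀ j, P j = A j + w 1 * (B j - A j) + w 2 * (C j - A j) + w 3 * (D j - A j) := by
    intro j
    rw [hP, hw0]
    simp only [PiLp.add_apply, PiLp.smul_apply, smul_eq_mul]
    ring
  refine ⟨?_, ?_, ?_, ?_⟩ <;>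
  · simp only [det3, PiLp.sub_apply, hPj, hw0]
    ring

theorem main
    (A B C D P : EuclideanSpace ℝ (Fin 3))
    (hP : P ∈ interior (convexHull ℝ {A, B, C, D}))
    (hABCD : AffineIndependent ℝ ![A, B, C, D])
    (O O₁ O₂ O₃ O₄ : EuclideanSpace ℝ (Fin 3))
    (hO : dist O A = dist O B ∧ dist O B = dist O C ∧ dist O C = dist O D)
    (hO₁ : dist O₁ P = dist O₁ A ∧ dist O₁ A = dist O₁ B ∧ dist O₁ B = dist O₁ C)
    (hO₂ : dist O₂ P = dist O₂ A ∧ dist O₂ A = dist O₂ B ∧ dist O₂ B = dist O₂ D)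
    (hO₃ : dist O₃ P = dist O₃ A ∧ dist O₃ A = dist O₃ C ∧ dist O₃ C = dist O₃ D)
    (hO₄ : dist O₄ P = dist O₄ B ∧ dist O₄ B = dist O₄ C ∧ dist O₄ C = dist O₄ D) :
    (volume (convexHull ℝ {P, A, B, C})).toReal • O₁ +
      (volume (convexHull ℝ {P, A, B, D})).toReal • O₂ +
      (volume (convexHull ℝ {P, A, C, D})).toReal • O₃ +
      (volume (convexHull ℝ {P, B, C, D})).toReal • O₄ =
      (volume (convexHull ℝ {A, B, C, D})).toReal • O := by
  classical
  obtain ⟨w, hwpos, hwsum, hwP⟩ := exists_weights hABCD hP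
  obtain ⟨hd1, hd2, hd3, hd4⟩ := det_identities hwsum hwP
  set s : ℝ := det3 (B - A) (C - A) (D - A) with hs
  have hsne : s ≠ 0 := det3_ne_zero hABCD
  have hO' : s • O = Fv A B C D :=
    circ_formula hO.1 (hO.1.trans hO.2.1) ((hO.1.trans hO.2.1).trans hO.2.2)
  have hF1 : det3 (A - P) (B - P) (C - P) • O₁ = Fv P A B C :=
    circ_formula hO₁.1 (hO₁.1.trans hO₁.2.1) ((hO₁.1.trans hO₁.2.1).trans hO₁.2.2)
  have hF2 : det3 (A - P) (B - P) (D - P) • O₂ = Fv P A B D :=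
    circ_formula hO₂.1 (hO₂.1.trans hO₂.2.1) ((hO₂.1.trans hO₂.2.1).trans hO₂.2.2)
  have hF3 : det3 (A - P) (C - P) (D - P) • O₃ = Fv P A C D :=
    circ_formula hO₃.1 (hO₃.1.trans hO₃.2.1) ((hO₃.1.trans hO₃.2.1).trans hO₃.2.2)
  have hF4 : det3 (B - P) (C - P) (D - P) • O₄ = Fv P B C D :=
    circ_formula hO₄.1 (hO₄.1.trans hO₄.2.1) ((hO₄.1.trans hO₄.2.1).trans hO₄.2.2)
  have hv : ∀ a b c d : EuclideanSpace ℝ (Fin 3),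
      (volume (convexHull ℝ ({a, b, c, d} : Set (EuclideanSpace ℝ (Fin 3))))).toReal =
        |det3 (b - a) (c - a) (d - a)| * baseVol.toReal := by
    intro a b c d
    rw [volume_tetra, ENNReal.toReal_mul, ENNReal.toReal_ofReal (abs_nonneg _)]
  rw [hv P A B C, hv P A B D, hv P A C D, hv P B C D, hv A B C D, ← hs]
  rw [hd1, hd2, hd3, hd4]
  rw [abs_neg, abs_neg, abs_mul, abs_mul, abs_mul, abs_mul,
    abs_of_pos (hwpos 0), abs_of_pos (hwpos 1), abs_of_pos (hwpos 2), abs_of_pos (hwpos 3)]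
  -- reduce to the algebraic identity without baseVol
  set κ : ℝ := baseVol.toReal with hκ
  have key : (w 3 * |s|) • O₁ + (w 2 * |s|) • O₂ + (w 1 * |s|) • O₃ + (w 0 * |s|) • O₄
      = |s| • O := by
    have hFadd := Fv_additive P A B C D
    have hFv : Fv A B C D =
        Fv P A B D + Fv P B C D - Fv P A B C - Fv P A C D := by
      rw [eq_sub_iff_add_eq, eq_sub_iff_add_eq, hFadd]; abel
    rcases hsne.lt_or_gt with hneg | hpos
    · rw [abs_of_neg hneg]
      have e1 : (w 3 * -s) • O₁ = Fv P A B C := by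
        rw [show w 3 * -s = det3 (A - P) (B - P) (C - P) by rw [hd1]; ring]; exact hF1
      have e2 : (w 2 * -s) • O₂ = -Fv P A B D := by
        rw [show w 2 * -s = -det3 (A - P) (B - P) (D - P) by rw [hd2]; ring, neg_smul, hF2]
      have e3 : (w 1 * -s) • O₃ = Fv P A C D := by
        rw [show w 1 * -s = det3 (A - P) (C - P) (D - P) by rw [hd3]; ring]; exact hF3
      have e4 : (w 0 * -s) • O₄ = -Fv P B C D := by
        rw [show w 0 * -s = -det3 (B - P) (C - P) (D - P) by rw [hd4]; ring, neg_smul, hF4]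
      have eO : (-s) • O = -Fv A B C D := by rw [neg_smul, hO']
      rw [e1, e2, e3, e4, eO, hFv]
      abel
    · rw [abs_of_pos hpos]
      have e1 : (w 3 * s) • O₁ = -Fv P A B C := by
        rw [show w 3 * s = -det3 (A - P) (B - P) (C - P) by rw [hd1]; ring, neg_smul, hF1]
      have e2 : (w 2 * s) • O₂ = Fv P A B D := by
        rw [show w 2 * s = det3 (A - P) (B - P) (D - P) by rw [hd2]]; exact hF2
      have e3 : (w 1 * s) • O₃ = -Fv P A C D := by
        rw [show w 1 * s = -det3 (A - P) (C - P) (D - P) by rw [hd3]; ring, neg_smul, hF3]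
      have e4 : (w 0 * s) • O₄ = Fv P B C D := by
        rw [show w 0 * s = det3 (B - P) (C - P) (D - P) by rw [hd4]]; exact hF4
      rw [e1, e2, e3, e4, hO', hFv]
      abel
  calc (w 3 * |s| * κ) • O₁ + (w 2 * |s| * κ) • O₂ + (w 1 * |s| * κ) • O₃ +
        (w 0 * |s| * κ) • O₄
      = κ • ((w 3 * |s|) • O₁ + (w 2 * |s|) • O₂ + (w 1 * |s|) • O₃ + (w 0 * |s|) • O₄) := by
        simp only [smul_add, smul_smul]; ring_nf
    _ = κ • (|s| • O) := by rw [key]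
    _ = (|s| * κ) • O := by rw [smul_smul, mul_comm]

end

end IMC2009

/-- Subdividing a tetrahedron `ABCD` by an interior point `P` into `PABC`, `PABD`, `PACD`,
`PBCD`: the volume-weighted sum of circumcenters of the four small tetrahedra equals
`Vol(ABCD) • O(ABCD)` (IMC 2009, Problem 5). -/
theorem circumcenter_of_mass_tetrahedron_subdivision
    (A B C D P : EuclideanSpace ℝ (Fin 3))
    (hP : P ∈ interior (convexHull ℝ {A, B, C, D}))
    (hABCD : AffineIndependent ℝ ![A, B, C, D])
    (h₁ : AffineIndependent ℝ ![P, A, B, C])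
    (h₂ : AffineIndependent ℝ ![P, A, B, D])
    (h₃ : AffineIndependent ℝ ![P, A, C, D])
    (h₄ : AffineIndependent ℝ ![P, B, C, D])
    (O O₁ O₂ O₃ O₄ : EuclideanSpace ℝ (Fin 3))
    (hO : dist O A = dist O B ∧ dist O B = dist O C ∧ dist O C = dist O D)
    (hO₁ : dist O₁ P = dist O₁ A ∧ dist O₁ A = dist O₁ B ∧ dist O₁ B = dist O₁ C)
    (hO₂ : dist O₂ P = dist O₂ A ∧ dist O₂ A = dist O₂ B ∧ dist O₂ B = dist O₂ D)
    (hO₃ : dist O₃ P = dist O₃ A ∧ dist O₃ A = dist O₃ C ∧ dist O₃ C = dist O₃ D)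
    (hO₄ : dist O₄ P = dist O₄ B ∧ dist O₄ B = dist O₄ C ∧ dist O₄ C = dist O₄ D) :
    (volume (convexHull ℝ {P, A, B, C})).toReal • O₁ +
      (volume (convexHull ℝ {P, A, B, D})).toReal • O₂ +
      (volume (convexHull ℝ {P, A, C, D})).toReal • O₃ +
      (volume (convexHull ℝ {P, B, C, D})).toReal • O₄ =
      (volume (convexHull ℝ {A, B, C, D})).toReal • O := by
  exact IMC2009.main A B C D P hP hABCD O O₁ O₂ O₃ O₄ hO hO₁ hO₂ hO₃ hO₄
end
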